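/- Under the parametric Bellman setup with the integrability assumptions, for every w ∈ ℝ^{d_w} and every θ ∈ S: the function v ↦ ∫ B(x,v,w,θ)² dμ(x) + η‖v‖² on ℝ^{d_v} is everywhere finite, the matrix L̃(w,θ) is invertible, and v*(w,θ) := −L̃(w,θ)⁻¹ l̃(w,θ) is its unique global minimizer (i.e., the objective at v* is ≤ its value at every v, with equality only at v = v*). -/

import Mathlib

open Matrix MeasureTheory
open scoped Kronecker

noncomputable section

/-- `c(w) = (1, w)` as a column matrix. -/
def cmat {dw : ℕ} (w : Fin dw → ℝ) : Matrix (Unit ⊕ Fin dw) Unit ℝ :=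
  Matrix.of fun i _ => Sum.elim (fun _ => (1 : ℝ)) w i

/-- `c(w) ⊗ I_{dv}`, with the column index canonically identified with `Fin dv`. -/
def CI (dv : ℕ) {dw : ℕ} (w : Fin dw → ℝ) :
    Matrix ((Unit ⊕ Fin dw) × Fin dv) (Fin dv) ℝ :=
  (cmat w ⊗ₖ (1 : Matrix (Fin dv) (Fin dv) ℝ)).submatrix id fun j => ((), j)

/-- The vector `(1, w ⊗ w) ∈ ℝ^{1+dw²}`. -/
def oneKron {dw : ℕ} (w : Fin dw → ℝ) : Unit ⊕ Fin dw × Fin dw → ℝ :=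
  Sum.elim (fun _ => (1 : ℝ)) fun p => w p.1 * w p.2

/-- `ψ₀(x) = (q(x), vec(Φ(x) R(x) Φ(x)ᵀ / 2))`, with the `vec` of a `dw × dw` matrix
indexed by (column, row) pairs. -/
def psiZero {n m dw : ℕ} (q : (Fin n → ℝ) → ℝ)
    (R : (Fin n → ℝ) → Matrix (Fin m) (Fin m) ℝ)
    (Φ : (Fin n → ℝ) → Matrix (Fin dw) (Fin m) ℝ) (x : Fin n → ℝ) :
    Unit ⊕ Fin dw × Fin dw → ℝ :=
  Sum.elim (fun _ => q x) fun p => ((1 / 2 : ℝ) • (Φ x * R x * (Φ x)ᵀ)) p.2 p.1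

/-- The `n × (1 + dw)` matrix `[f(x), G(x) Φ(x)ᵀ]`. -/
def brkt {n m dw : ℕ} (f : (Fin n → ℝ) → Fin n → ℝ)
    (G : (Fin n → ℝ) → Matrix (Fin n) (Fin m) ℝ)
    (Φ : (Fin n → ℝ) → Matrix (Fin dw) (Fin m) ℝ) (x : Fin n → ℝ) :
    Matrix (Fin n) (Unit ⊕ Fin dw) ℝ :=
  Matrix.of fun i => Sum.elim (fun _ => f x i) fun j => (G x * (Φ x)ᵀ) i j

/-- `ψ_k(x) = vec(Dφ(x) · [f_k(x), G_k(x) Φ(x)ᵀ]) ∈ ℝ^{dv(1+dw)}`, with the `vec` of a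
`dv × (1+dw)` matrix indexed by (column, row) pairs. -/
def psiK {n m dv dw : ℕ} (Dφ : (Fin n → ℝ) → Matrix (Fin dv) (Fin n) ℝ)
    (f : (Fin n → ℝ) → Fin n → ℝ)
    (G : (Fin n → ℝ) → Matrix (Fin n) (Fin m) ℝ)
    (Φ : (Fin n → ℝ) → Matrix (Fin dw) (Fin m) ℝ) (x : Fin n → ℝ) :
    (Unit ⊕ Fin dw) × Fin dv → ℝ :=
  fun p => (Dφ x * brkt f G Φ x) p.2 p.1

/-- The (entrywise) Gram matrix `∫ ψ(x) ψ'(x)ᵀ dμ(x)`. -/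
def gram {n : ℕ} {ι ι' : Type*} (μ : Measure (Fin n → ℝ))
    (ψ : (Fin n → ℝ) → ι → ℝ) (ψ' : (Fin n → ℝ) → ι' → ℝ) : Matrix ι ι' ℝ :=
  Matrix.of fun a b => ∫ x, ψ x a * ψ' x b ∂μ

/-- `L_{k,k'}(w) = (c(w)⊗I)ᵀ (∫ ψ_k ψ_{k'}ᵀ dμ) (c(w)⊗I) + η I`. -/
def Lmat {n m K dv dw : ℕ} (μ : Measure (Fin n → ℝ))
    (Dφ : (Fin n → ℝ) → Matrix (Fin dv) (Fin n) ℝ)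
    (f : Fin K → (Fin n → ℝ) → Fin n → ℝ)
    (G : Fin K → (Fin n → ℝ) → Matrix (Fin n) (Fin m) ℝ)
    (Φ : (Fin n → ℝ) → Matrix (Fin dw) (Fin m) ℝ)
    (η : ℝ) (k k' : Fin K) (w : Fin dw → ℝ) : Matrix (Fin dv) (Fin dv) ℝ :=
  (CI dv w)ᵀ * gram μ (psiK Dφ (f k) (G k) Φ) (psiK Dφ (f k') (G k') Φ) * CI dv w + η • 1

/-- `l_k(w) = (c(w)⊗I)ᵀ (∫ ψ_k ψ₀ᵀ dμ) (1, w⊗w)`. -/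
def lvec {n m K dv dw : ℕ} (μ : Measure (Fin n → ℝ))
    (Dφ : (Fin n → ℝ) → Matrix (Fin dv) (Fin n) ℝ)
    (f : Fin K → (Fin n → ℝ) → Fin n → ℝ)
    (G : Fin K → (Fin n → ℝ) → Matrix (Fin n) (Fin m) ℝ)
    (Φ : (Fin n → ℝ) → Matrix (Fin dw) (Fin m) ℝ)
    (q : (Fin n → ℝ) → ℝ)
    (R : (Fin n → ℝ) → Matrix (Fin m) (Fin m) ℝ)
    (k : Fin K) (w : Fin dw → ℝ) : Fin dv → ℝ :=
  (CI dv w)ᵀ *ᵥ (gram μ (psiK Dφ (f k) (G k) Φ) (psiZero q R Φ) *ᵥ oneKron w)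

/-- `L̃(w,θ) = Σ_k Σ_{k'} h_k(θ) h_{k'}(θ) L_{k,k'}(w)`. -/
def Ltilde {n m K dv dw : ℕ} {S : Type*} (μ : Measure (Fin n → ℝ))
    (Dφ : (Fin n → ℝ) → Matrix (Fin dv) (Fin n) ℝ)
    (f : Fin K → (Fin n → ℝ) → Fin n → ℝ)
    (G : Fin K → (Fin n → ℝ) → Matrix (Fin n) (Fin m) ℝ)
    (Φ : (Fin n → ℝ) → Matrix (Fin dw) (Fin m) ℝ)
    (η : ℝ) (h : Fin K → S → ℝ) (w : Fin dw → ℝ) (θ : S) : Matrix (Fin dv) (Fin dv) ℝ :=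
  ∑ k, ∑ k', (h k θ * h k' θ) • Lmat μ Dφ f G Φ η k k' w

/-- `l̃(w,θ) = Σ_k h_k(θ) l_k(w)`. -/
def ltilde {n m K dv dw : ℕ} {S : Type*} (μ : Measure (Fin n → ℝ))
    (Dφ : (Fin n → ℝ) → Matrix (Fin dv) (Fin n) ℝ)
    (f : Fin K → (Fin n → ℝ) → Fin n → ℝ)
    (G : Fin K → (Fin n → ℝ) → Matrix (Fin n) (Fin m) ℝ)
    (Φ : (Fin n → ℝ) → Matrix (Fin dw) (Fin m) ℝ)
    (q : (Fin n → ℝ) → ℝ)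
    (R : (Fin n → ℝ) → Matrix (Fin m) (Fin m) ℝ)
    (h : Fin K → S → ℝ) (w : Fin dw → ℝ) (θ : S) : Fin dv → ℝ :=
  ∑ k, h k θ • lvec μ Dφ f G Φ q R k w

/-- The Bellman residual
`B(x,v,w,θ) = q(x) + ½ wᵀΦ(x)R(x)Φ(x)ᵀw + vᵀ Dφ(x) (Σ_k h_k(θ)(f_k(x) + G_k(x)Φ(x)ᵀ w))`. -/
def Bres {n m K dv dw : ℕ} {S : Type*}
    (q : (Fin n → ℝ) → ℝ)
    (R : (Fin n → ℝ) → Matrix (Fin m) (Fin m) ℝ)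
    (Φ : (Fin n → ℝ) → Matrix (Fin dw) (Fin m) ℝ)
    (f : Fin K → (Fin n → ℝ) → Fin n → ℝ)
    (G : Fin K → (Fin n → ℝ) → Matrix (Fin n) (Fin m) ℝ)
    (Dφ : (Fin n → ℝ) → Matrix (Fin dv) (Fin n) ℝ)
    (h : Fin K → S → ℝ)
    (x : Fin n → ℝ) (v : Fin dv → ℝ) (w : Fin dw → ℝ) (θ : S) : ℝ :=
  q x + (1 / 2) * (w ⬝ᵥ ((Φ x * R x * (Φ x)ᵀ) *ᵥ w)) +
    v ⬝ᵥ (Dφ x *ᵥ ∑ k, h k θ • (f k x + (G k x * (Φ x)ᵀ) *ᵥ w))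


section aux
variable {X : Type*} [MeasurableSpace X] {μ : MeasureTheory.Measure X}
variable {ι ι' : Type*} [Fintype ι] [Fintype ι']

lemma aux_int_entry {ψ : X → ι → ℝ} {ψ' : X → ι' → ℝ}
    (hm : ∀ p, Measurable fun x => ψ x p) (hm' : ∀ p, Measurable fun x => ψ' x p)
    (h2 : Integrable (fun x => ‖ψ x‖ ^ 2) μ) (h2' : Integrable (fun x => ‖ψ' x‖ ^ 2) μ)
    (p : ι) (p' : ι') : Integrable (fun x => ψ x p * ψ' x p') μ := by
  refine Integrable.mono' (((h2.add h2').const_mul (1 / 2)))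
    (((hm p).mul (hm' p')).aestronglyMeasurable) ?_
  filter_upwards with x
  have h1 : |ψ x p| ≤ ‖ψ x‖ := by simpa using norm_le_pi_norm (ψ x) p
  have h2 : |ψ' x p'| ≤ ‖ψ' x‖ := by simpa using norm_le_pi_norm (ψ' x) p'
  have hn1 : (0:ℝ) ≤ ‖ψ x‖ := norm_nonneg _
  have hn2 : (0:ℝ) ≤ ‖ψ' x‖ := norm_nonneg _
  have habs : ‖ψ x p * ψ' x p'‖ = |ψ x p| * |ψ' x p'| := by
    rw [Real.norm_eq_abs, abs_mul]
  rw [habs]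
  simp only [Pi.add_apply]
  nlinarith [abs_nonneg (ψ x p), abs_nonneg (ψ' x p'), sq_nonneg (|ψ x p| - |ψ' x p'|),
    sq_nonneg (‖ψ x‖ - |ψ x p|), sq_nonneg (‖ψ' x‖ - |ψ' x p'|)]

lemma aux_dot_eq (u : ι → ℝ) (u' : ι' → ℝ) (ψ : X → ι → ℝ) (ψ' : X → ι' → ℝ) (x : X) :
    (∑ p, u p * ψ x p) * (∑ p', u' p' * ψ' x p')
      = ∑ p, ∑ p', (u p * u' p') * (ψ x p * ψ' x p') := by
  rw [Finset.sum_mul_sum]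
  exact Finset.sum_congr rfl fun p _ => Finset.sum_congr rfl fun p' _ => by ring

lemma aux_int_dot {ψ : X → ι → ℝ} {ψ' : X → ι' → ℝ}
    (hm : ∀ p, Measurable fun x => ψ x p) (hm' : ∀ p, Measurable fun x => ψ' x p)
    (h2 : Integrable (fun x => ‖ψ x‖ ^ 2) μ) (h2' : Integrable (fun x => ‖ψ' x‖ ^ 2) μ)
    (u : ι → ℝ) (u' : ι' → ℝ) :
    Integrable (fun x => (∑ p, u p * ψ x p) * (∑ p', u' p' * ψ' x p')) μ := by
  simp only [aux_dot_eq]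
  exact integrable_finset_sum _ fun p _ => integrable_finset_sum _ fun p' _ =>
    (aux_int_entry hm hm' h2 h2' p p').const_mul _

lemma aux_integral_dot {ψ : X → ι → ℝ} {ψ' : X → ι' → ℝ}
    (hm : ∀ p, Measurable fun x => ψ x p) (hm' : ∀ p, Measurable fun x => ψ' x p)
    (h2 : Integrable (fun x => ‖ψ x‖ ^ 2) μ) (h2' : Integrable (fun x => ‖ψ' x‖ ^ 2) μ)
    (u : ι → ℝ) (u' : ι' → ℝ) :
    ∫ x, (∑ p, u p * ψ x p) * (∑ p', u' p' * ψ' x p') ∂μ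
      = ∑ p, ∑ p', (u p * u' p') * ∫ x, ψ x p * ψ' x p' ∂μ := by
  simp only [aux_dot_eq]
  rw [integral_finset_sum _ fun p _ => integrable_finset_sum _ fun p' _ =>
    (aux_int_entry hm hm' h2 h2' p p').const_mul _]
  refine Finset.sum_congr rfl fun p _ => ?_
  rw [integral_finset_sum _ fun p' _ => (aux_int_entry hm hm' h2 h2' p p').const_mul _]
  exact Finset.sum_congr rfl fun p' _ => integral_const_mul _ _

end aux
section ptwise
variable {n m dv dw : ℕ}

lemma meas_psiZero (q : (Fin n → ℝ) → ℝ) (R : (Fin n → ℝ) → Matrix (Fin m) (Fin m) ℝ)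
    (Φ : (Fin n → ℝ) → Matrix (Fin dw) (Fin m) ℝ)
    (hq : Measurable q) (hR : ∀ i j, Measurable fun x => R x i j)
    (hΦ : ∀ i j, Measurable fun x => Φ x i j) (s : Unit ⊕ Fin dw × Fin dw) :
    Measurable fun x => psiZero q R Φ x s := by
  rcases s with s | p
  · simpa [psiZero] using hq
  · have : (fun x => psiZero q R Φ x (Sum.inr p))
        = fun x => (1/2 : ℝ) * ∑ j, (∑ l, Φ x p.2 l * R x l j) * Φ x p.1 j := by
      funext x
      simp [psiZero, Matrix.mul_apply, Matrix.smul_apply, Matrix.transpose_apply]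
    rw [this]
    exact (Finset.measurable_sum _ fun j _ => ((Finset.measurable_sum _ fun l _ =>
      ((hΦ p.2 l).mul (hR l j)))).mul (hΦ p.1 j)).const_mul _

lemma meas_psiK (Dφ : (Fin n → ℝ) → Matrix (Fin dv) (Fin n) ℝ)
    (f : (Fin n → ℝ) → Fin n → ℝ) (G : (Fin n → ℝ) → Matrix (Fin n) (Fin m) ℝ)
    (Φ : (Fin n → ℝ) → Matrix (Fin dw) (Fin m) ℝ)
    (hDφ : ∀ i j, Measurable fun x => Dφ x i j)
    (hf : Measurable f) (hG : ∀ i j, Measurable fun x => G x i j)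
    (hΦ : ∀ i j, Measurable fun x => Φ x i j) (p : (Unit ⊕ Fin dw) × Fin dv) :
    Measurable fun x => psiK Dφ f G Φ x p := by
  have : (fun x => psiK Dφ f G Φ x p)
      = fun x => ∑ j, Dφ x p.2 j * brkt f G Φ x j p.1 := by
    funext x; simp [psiK, Matrix.mul_apply]
  rw [this]
  refine Finset.measurable_sum _ fun j _ => (hDφ p.2 j).mul ?_
  rcases p with ⟨s | u, i⟩
  · simpa [brkt, Function.comp_def] using (measurable_pi_apply j).comp hf
  · have : (fun x => brkt f G Φ x j (Sum.inr u)) = fun x => ∑ l, G x j l * Φ x u l := by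
      funext x; simp [brkt, Matrix.mul_apply, Matrix.transpose_apply]
    rw [this]
    exact Finset.measurable_sum _ fun l _ => (hG j l).mul (hΦ u l)

lemma A_eq (q : (Fin n → ℝ) → ℝ) (R : (Fin n → ℝ) → Matrix (Fin m) (Fin m) ℝ)
    (Φ : (Fin n → ℝ) → Matrix (Fin dw) (Fin m) ℝ) (w : Fin dw → ℝ) (x : Fin n → ℝ) :
    (∑ s, oneKron w s * psiZero q R Φ x s)
      = q x + (1/2) * (w ⬝ᵥ ((Φ x * R x * (Φ x)ᵀ) *ᵥ w)) := by
  rw [Fintype.sum_sum_type]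
  simp only [oneKron, psiZero, Sum.elim_inl, Sum.elim_inr, Matrix.smul_apply, smul_eq_mul,
    dotProduct, Matrix.mulVec, Finset.mul_sum, Fintype.sum_prod_type]
  rw [Finset.sum_comm]
  congr 1
  · simp
  · exact Finset.sum_congr rfl fun i _ => Finset.sum_congr rfl fun j _ => by ring

lemma Bk_eq (Dφ : (Fin n → ℝ) → Matrix (Fin dv) (Fin n) ℝ)
    (f : (Fin n → ℝ) → Fin n → ℝ) (G : (Fin n → ℝ) → Matrix (Fin n) (Fin m) ℝ)
    (Φ : (Fin n → ℝ) → Matrix (Fin dw) (Fin m) ℝ) (w : Fin dw → ℝ) (x : Fin n → ℝ) (i : Fin dv) :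
    (∑ p, CI dv w p i * psiK Dφ f G Φ x p)
      = (Dφ x *ᵥ (f x + (G x * (Φ x)ᵀ) *ᵥ w)) i := by
  rw [Fintype.sum_prod_type, Fintype.sum_sum_type]
  simp only [CI, Matrix.submatrix_apply, id_eq, Matrix.kroneckerMap_apply, cmat, Matrix.of_apply,
    Sum.elim_inl, Sum.elim_inr, psiK, Matrix.one_apply, mul_ite, mul_one, mul_zero, ite_mul,
    zero_mul, Finset.sum_ite_eq', Finset.mem_univ, if_true, one_mul]
  simp only [Matrix.mulVec, dotProduct, Matrix.mul_apply, brkt, Matrix.of_apply,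
    Sum.elim_inl, Sum.elim_inr, Pi.add_apply, Finset.mul_sum, Finset.sum_mul, mul_add,
    Finset.sum_add_distrib]
  congr 1
  · simp
  · rw [Finset.sum_comm]
    exact Finset.sum_congr rfl fun a _ => Finset.sum_congr rfl fun b _ =>
      Finset.sum_congr rfl fun c _ => by ring

end ptwise

/-- Under the parametric Bellman setup with the integrability assumptions,
for every `w` and `θ` the objective `v ↦ ∫ B(x,v,w,θ)² dμ + η‖v‖²` is everywhere finite
(the integrand is integrable for every `v`), the matrix `L̃(w,θ)` is invertible, and
`v* = −L̃(w,θ)⁻¹ l̃(w,θ)` is its unique global minimizer. -/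
theorem optimal_parametric_cost_solution
    {n m K dv dw : ℕ} (hn : 0 < n) (hm : 0 < m) (hK : 0 < K) (hdv : 0 < dv) (hdw : 0 < dw)
    (μ : Measure (Fin n → ℝ))
    (q : (Fin n → ℝ) → ℝ)
    (R : (Fin n → ℝ) → Matrix (Fin m) (Fin m) ℝ)
    (Φ : (Fin n → ℝ) → Matrix (Fin dw) (Fin m) ℝ)
    (f : Fin K → (Fin n → ℝ) → Fin n → ℝ)
    (G : Fin K → (Fin n → ℝ) → Matrix (Fin n) (Fin m) ℝ)
    (hq : Measurable q)
    (hR : ∀ i j, Measurable fun x => R x i j)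
    (hΦ : ∀ i j, Measurable fun x => Φ x i j)
    (hf : ∀ k, Measurable (f k))
    (hG : ∀ k i j, Measurable fun x => G k x i j)
    (φ : (Fin n → ℝ) → Fin dv → ℝ)
    (Dφ : (Fin n → ℝ) → Matrix (Fin dv) (Fin n) ℝ)
    (hφ : ∀ x, HasFDerivAt φ (LinearMap.toContinuousLinearMap (Dφ x).mulVecLin) x)
    (hDφ : ∀ i j, Measurable fun x => Dφ x i j)
    (S : Type*) (h : Fin K → S → ℝ)
    (hh01 : ∀ k θ, h k θ ∈ Set.Icc (0 : ℝ) 1)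
    (hsum : ∀ θ : S, ∑ k, h k θ = 1)
    (η : ℝ) (hη : 0 < η)
    (hint0 : Integrable (fun x => ‖psiZero q R Φ x‖ ^ 2) μ)
    (hintk : ∀ k, Integrable (fun x => ‖psiK Dφ (f k) (G k) Φ x‖ ^ 2) μ) :
    ∀ (w : Fin dw → ℝ) (θ : S) (gobj : (Fin dv → ℝ) → ℝ) (vstar : Fin dv → ℝ),
      (∀ v, gobj v = (∫ x, Bres q R Φ f G Dφ h x v w θ ^ 2 ∂μ) + η * ∑ i, v i ^ 2) →
      vstar = -((Ltilde μ Dφ f G Φ η h w θ)⁻¹ *ᵥ ltilde μ Dφ f G Φ q R h w θ) →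
      (∀ v : Fin dv → ℝ, Integrable (fun x => Bres q R Φ f G Dφ h x v w θ ^ 2) μ) ∧
      IsUnit (Ltilde μ Dφ f G Φ η h w θ) ∧
      ∀ v : Fin dv → ℝ, gobj vstar ≤ gobj v ∧ (gobj vstar = gobj v → v = vstar) := by
  intro w θ gobj vstar hgobj hvstar
  have hmψ0 : ∀ s, Measurable fun x => psiZero q R Φ x s := meas_psiZero q R Φ hq hR hΦ
  have hmψk : ∀ k p, Measurable fun x => psiK Dφ (f k) (G k) Φ x p :=
    fun k => meas_psiK Dφ (f k) (G k) Φ hDφ (hf k) (hG k) hΦ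
  set A : (Fin n → ℝ) → ℝ := fun x => ∑ s, oneKron w s * psiZero q R Φ x s with hAdef
  set Bk : Fin K → Fin dv → (Fin n → ℝ) → ℝ :=
    fun k i x => ∑ p, CI dv w p i * psiK Dφ (f k) (G k) Φ x p with hBkdef
  set Bb : Fin dv → (Fin n → ℝ) → ℝ := fun i x => ∑ k, h k θ * Bk k i x with hBbdef
  set L := Ltilde μ Dφ f G Φ η h w θ with hLdef
  set l := ltilde μ Dφ f G Φ q R h w θ with hldef
  -- basic integrability
  have hiAA : Integrable (fun x => A x * A x) μ :=
    aux_int_dot hmψ0 hmψ0 hint0 hint0 (oneKron w) (oneKron w)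
  have hiAB : ∀ k (i : Fin dv), Integrable (fun x => A x * Bk k i x) μ := fun k i =>
    aux_int_dot hmψ0 (hmψk k) hint0 (hintk k) (oneKron w) (fun p => CI dv w p i)
  have hiBA : ∀ k (i : Fin dv), Integrable (fun x => Bk k i x * A x) μ := fun k i =>
    aux_int_dot (hmψk k) hmψ0 (hintk k) hint0 (fun p => CI dv w p i) (oneKron w)
  have hiBB : ∀ k k' (i j : Fin dv), Integrable (fun x => Bk k i x * Bk k' j x) μ :=
    fun k k' i j =>
    aux_int_dot (hmψk k) (hmψk k') (hintk k) (hintk k') (fun p => CI dv w p i)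
      (fun p => CI dv w p j)
  have hABb : ∀ i, Integrable (fun x => A x * Bb i x) μ := by
    intro i
    have e : (fun x => A x * Bb i x) = fun x => ∑ k, h k θ * (A x * Bk k i x) := by
      funext x
      rw [hBbdef, Finset.mul_sum]
      exact Finset.sum_congr rfl fun k _ => by ring
    rw [e]
    exact integrable_finset_sum _ fun k _ => (hiAB k i).const_mul _
  have hBbBb : ∀ i j, Integrable (fun x => Bb i x * Bb j x) μ := by
    intro i j
    have e : (fun x => Bb i x * Bb j x)
        = fun x => ∑ k, ∑ k', (h k θ * h k' θ) * (Bk k i x * Bk k' j x) := by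
      funext x
      rw [hBbdef, Finset.sum_mul_sum]
      exact Finset.sum_congr rfl fun k _ => Finset.sum_congr rfl fun k' _ => by ring
    rw [e]
    exact integrable_finset_sum _ fun k _ => integrable_finset_sum _ fun k' _ =>
      (hiBB k k' i j).const_mul _
  -- pointwise form of the residual
  have hBres : ∀ (v : Fin dv → ℝ) x, Bres q R Φ f G Dφ h x v w θ = A x + ∑ i, v i * Bb i x := by
    intro v x
    have h2 : ∀ k (i : Fin dv), Bk k i x = (Dφ x *ᵥ (f k x + (G k x * (Φ x)ᵀ) *ᵥ w)) i :=
      fun k i => Bk_eq Dφ (f k) (G k) Φ w x i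
    have h3 : Dφ x *ᵥ (∑ k, h k θ • (f k x + (G k x * (Φ x)ᵀ) *ᵥ w))
        = ∑ k, h k θ • (Dφ x *ᵥ (f k x + (G k x * (Φ x)ᵀ) *ᵥ w)) := by
      simp only [← Matrix.mulVecLin_apply, map_sum, LinearMap.map_smul]
    have h1 : A x = q x + (1 / 2) * (w ⬝ᵥ ((Φ x * R x * (Φ x)ᵀ) *ᵥ w)) := A_eq q R Φ w x
    simp only [Bres, h3]
    rw [h1]
    congr 1
    have h4 : ∀ i, Bb i x = ∑ k, h k θ * (Dφ x *ᵥ (f k x + (G k x * (Φ x)ᵀ) *ᵥ w)) i := by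
      intro i
      show (∑ k, h k θ * Bk k i x) = _
      exact Finset.sum_congr rfl fun k _ => by rw [h2 k i]
    simp only [h4, dotProduct, Finset.sum_apply, Pi.smul_apply, smul_eq_mul]
  -- expansion of the square
  have hsq : ∀ (v : Fin dv → ℝ) x, Bres q R Φ f G Dφ h x v w θ ^ 2
      = A x * A x + (∑ i, (2 * v i) * (A x * Bb i x))
        + ∑ i, ∑ j, (v i * v j) * (Bb i x * Bb j x) := by
    intro v x
    rw [hBres v x]
    have e2 : (2 : ℝ) * A x * (∑ i, v i * Bb i x) = ∑ i, (2 * v i) * (A x * Bb i x) := by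
      rw [Finset.mul_sum]
      exact Finset.sum_congr rfl fun i _ => by ring
    have e3 : (∑ i, v i * Bb i x) * (∑ j, v j * Bb j x)
        = ∑ i, ∑ j, (v i * v j) * (Bb i x * Bb j x) := by
      rw [Finset.sum_mul_sum]
      exact Finset.sum_congr rfl fun i _ => Finset.sum_congr rfl fun j _ => by ring
    calc (A x + ∑ i, v i * Bb i x) ^ 2
        = A x * A x + 2 * A x * (∑ i, v i * Bb i x)
          + (∑ i, v i * Bb i x) * (∑ j, v j * Bb j x) := by ring
      _ = _ := by rw [e2, e3]
  have hBint : ∀ v : Fin dv → ℝ, Integrable (fun x => Bres q R Φ f G Dφ h x v w θ ^ 2) μ := by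
    intro v
    have e : (fun x => Bres q R Φ f G Dφ h x v w θ ^ 2)
        = fun x => A x * A x + (∑ i, (2 * v i) * (A x * Bb i x))
          + ∑ i, ∑ j, (v i * v j) * (Bb i x * Bb j x) := funext (hsq v)
    rw [e]
    exact (hiAA.add (integrable_finset_sum _ fun i _ => (hABb i).const_mul _)).add
      (integrable_finset_sum _ fun i _ => integrable_finset_sum _ fun j _ =>
        (hBbBb i j).const_mul _)
  have hBintegral : ∀ v : Fin dv → ℝ, ∫ x, Bres q R Φ f G Dφ h x v w θ ^ 2 ∂μ
      = (∫ x, A x * A x ∂μ) + (∑ i, (2 * v i) * ∫ x, A x * Bb i x ∂μ)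
        + ∑ i, ∑ j, (v i * v j) * ∫ x, Bb i x * Bb j x ∂μ := by
    intro v
    have i1 : Integrable (fun x => ∑ i, (2 * v i) * (A x * Bb i x)) μ :=
      integrable_finset_sum _ fun i _ => (hABb i).const_mul _
    have i2 : Integrable (fun x => ∑ i, ∑ j, (v i * v j) * (Bb i x * Bb j x)) μ :=
      integrable_finset_sum _ fun i _ => integrable_finset_sum _ fun j _ =>
        (hBbBb i j).const_mul _
    have i12 : Integrable
        (fun x => A x * A x + ∑ i, (2 * v i) * (A x * Bb i x)) μ := hiAA.add i1
    simp only [hsq v]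
    rw [integral_add i12 i2, integral_add hiAA i1,
      integral_finset_sum _ (fun i _ => (hABb i).const_mul _),
      integral_finset_sum _ (fun i _ => integrable_finset_sum _ fun j _ =>
        (hBbBb i j).const_mul _)]
    congr 1
    · congr 1
      exact Finset.sum_congr rfl fun i _ => integral_const_mul _ _
    · refine Finset.sum_congr rfl fun i _ => ?_
      rw [integral_finset_sum _ (fun j _ => (hBbBb i j).const_mul _)]
      exact Finset.sum_congr rfl fun j _ => integral_const_mul _ _
  -- entries of Ltilde
  have hgramBB : ∀ k k' (i j : Fin dv), (∫ x, Bk k i x * Bk k' j x ∂μ)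
      = ∑ p, ∑ p', (CI dv w p i * CI dv w p' j)
        * ∫ x, psiK Dφ (f k) (G k) Φ x p * psiK Dφ (f k') (G k') Φ x p' ∂μ :=
    fun k k' i j => aux_integral_dot (hmψk k) (hmψk k') (hintk k) (hintk k')
      (fun p => CI dv w p i) (fun p => CI dv w p j)
  have hLmat : ∀ k k' (i j : Fin dv), Lmat μ Dφ f G Φ η k k' w i j
      = (∫ x, Bk k i x * Bk k' j x ∂μ) + η * (if i = j then 1 else 0) := by
    intro k k' i j
    rw [hgramBB k k' i j]
    simp only [Lmat, Matrix.add_apply, Matrix.smul_apply, Matrix.one_apply, smul_eq_mul,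
      mul_ite, mul_one, mul_zero]
    congr 1
    simp only [Matrix.mul_apply, Matrix.transpose_apply, _root_.gram, Matrix.of_apply, Finset.sum_mul]
    rw [Finset.sum_comm]
    exact Finset.sum_congr rfl fun p _ => Finset.sum_congr rfl fun p' _ => by ring
  have hL : ∀ i j, L i j = (∫ x, Bb i x * Bb j x ∂μ) + η * (if i = j then 1 else 0) := by
    intro i j
    have hBbint : (∫ x, Bb i x * Bb j x ∂μ)
        = ∑ k, ∑ k', (h k θ * h k' θ) * ∫ x, Bk k i x * Bk k' j x ∂μ := by
      have e : (fun x => Bb i x * Bb j x)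
          = fun x => ∑ k, ∑ k', (h k θ * h k' θ) * (Bk k i x * Bk k' j x) := by
        funext x
        rw [hBbdef, Finset.sum_mul_sum]
        exact Finset.sum_congr rfl fun k _ => Finset.sum_congr rfl fun k' _ => by ring
      rw [e, integral_finset_sum _ fun k _ => integrable_finset_sum _ fun k' _ =>
        (hiBB k k' i j).const_mul _]
      refine Finset.sum_congr rfl fun k _ => ?_
      rw [integral_finset_sum _ fun k' _ => (hiBB k k' i j).const_mul _]
      exact Finset.sum_congr rfl fun k' _ => integral_const_mul _ _
    have hLt : L i j = ∑ k, ∑ k', (h k θ * h k' θ)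
        * ((∫ x, Bk k i x * Bk k' j x ∂μ) + η * (if i = j then 1 else 0)) := by
      rw [hLdef]
      simp only [Ltilde, Matrix.sum_apply, Matrix.smul_apply, smul_eq_mul]
      exact Finset.sum_congr rfl fun k _ => Finset.sum_congr rfl fun k' _ => by
        rw [hLmat k k' i j]
    have hsum2 : ∑ k, ∑ k', (h k θ * h k' θ) = 1 := by
      rw [← Finset.sum_mul_sum, hsum θ, one_mul]
    rw [hLt, hBbint]
    simp only [mul_add, Finset.sum_add_distrib]
    congr 1
    simp only [← Finset.sum_mul]
    rw [hsum2, one_mul]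
  -- entries of ltilde
  have hlv : ∀ i, l i = ∫ x, A x * Bb i x ∂μ := by
    intro i
    have hgramBA : ∀ k, (∫ x, Bk k i x * A x ∂μ)
        = ∑ p, ∑ s, (CI dv w p i * oneKron w s)
          * ∫ x, psiK Dφ (f k) (G k) Φ x p * psiZero q R Φ x s ∂μ :=
      fun k => aux_integral_dot (hmψk k) hmψ0 (hintk k) hint0
        (fun p => CI dv w p i) (oneKron w)
    have hlveq : ∀ k, lvec μ Dφ f G Φ q R k w i = ∫ x, Bk k i x * A x ∂μ := by
      intro k
      rw [hgramBA k]
      simp only [lvec, Matrix.mulVec, dotProduct, Matrix.transpose_apply, _root_.gram,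
        Matrix.of_apply, Finset.mul_sum]
      exact Finset.sum_congr rfl fun p _ => Finset.sum_congr rfl fun s _ => by ring
    have hlt : l i = ∑ k, h k θ * ∫ x, Bk k i x * A x ∂μ := by
      rw [hldef]
      simp only [ltilde, Finset.sum_apply, Pi.smul_apply, smul_eq_mul]
      exact Finset.sum_congr rfl fun k _ => by rw [hlveq k]
    have e : (fun x => A x * Bb i x) = fun x => ∑ k, h k θ * (Bk k i x * A x) := by
      funext x
      rw [hBbdef, Finset.mul_sum]
      exact Finset.sum_congr rfl fun k _ => by ring
    rw [hlt, e, integral_finset_sum _ fun k _ => (hiBA k i).const_mul _]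
    exact Finset.sum_congr rfl fun k _ => (integral_const_mul _ _).symm
  -- quadratic form of L
  have hquadform : ∀ u : Fin dv → ℝ, u ⬝ᵥ (L *ᵥ u)
      = (∑ i, ∑ j, (u i * u j) * ∫ x, Bb i x * Bb j x ∂μ) + η * ∑ i, u i ^ 2 := by
    intro u
    simp only [dotProduct, Matrix.mulVec, Finset.mul_sum]
    have e : ∀ (i j : Fin dv), u i * (L i j * u j)
        = (u i * u j) * (∫ x, Bb i x * Bb j x ∂μ) + η * (if i = j then u i * u j else 0) := by
      intro i j
      rw [hL i j]
      by_cases hij : i = j <;> simp [hij] <;> ring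
    simp only [e, Finset.sum_add_distrib]
    congr 1
    simp only [← Finset.mul_sum]
    congr 1
    refine Finset.sum_congr rfl fun i _ => ?_
    rw [Finset.sum_ite_eq _ i (fun j => u i * u j)]
    simp [sq]
  have hexp : ∀ u : Fin dv → ℝ,
      ∫ x, (∑ i, u i * Bb i x) * (∑ j, u j * Bb j x) ∂μ
        = ∑ i, ∑ j, (u i * u j) * ∫ x, Bb i x * Bb j x ∂μ := by
    intro u
    have e : (fun x => (∑ i, u i * Bb i x) * (∑ j, u j * Bb j x))
        = fun x => ∑ i, ∑ j, (u i * u j) * (Bb i x * Bb j x) := by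
      funext x
      rw [Finset.sum_mul_sum]
      exact Finset.sum_congr rfl fun i _ => Finset.sum_congr rfl fun j _ => by ring
    rw [e, integral_finset_sum _ fun i _ => integrable_finset_sum _ fun j _ =>
      (hBbBb i j).const_mul _]
    refine Finset.sum_congr rfl fun i _ => ?_
    rw [integral_finset_sum _ fun j _ => (hBbBb i j).const_mul _]
    exact Finset.sum_congr rfl fun j _ => integral_const_mul _ _
  have hquad : ∀ u : Fin dv → ℝ, u ⬝ᵥ (L *ᵥ u)
      = (∫ x, (∑ i, u i * Bb i x) * (∑ j, u j * Bb j x) ∂μ) + η * ∑ i, u i ^ 2 := by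
    intro u
    rw [hquadform u, hexp u]
  have hquad_nonneg : ∀ u : Fin dv → ℝ, 0 ≤ u ⬝ᵥ (L *ᵥ u) := by
    intro u
    rw [hquad u]
    have h1 : 0 ≤ ∫ x, (∑ i, u i * Bb i x) * (∑ j, u j * Bb j x) ∂μ :=
      integral_nonneg fun x => mul_self_nonneg _
    have h2 : 0 ≤ ∑ i, u i ^ 2 := Finset.sum_nonneg fun i _ => sq_nonneg _
    have := mul_nonneg hη.le h2
    linarith
  have hquad_zero : ∀ u : Fin dv → ℝ, u ⬝ᵥ (L *ᵥ u) = 0 → u = 0 := by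
    intro u hu
    rw [hquad u] at hu
    have h1 : 0 ≤ ∫ x, (∑ i, u i * Bb i x) * (∑ j, u j * Bb j x) ∂μ :=
      integral_nonneg fun x => mul_self_nonneg _
    have h2 : 0 ≤ ∑ i, u i ^ 2 := Finset.sum_nonneg fun i _ => sq_nonneg _
    have h3 : ∑ i, u i ^ 2 = 0 := by nlinarith
    funext i
    have h4 := (Finset.sum_eq_zero_iff_of_nonneg (fun i _ => sq_nonneg (u i))).1 h3 i
      (Finset.mem_univ i)
    have h5 : u i = 0 := by
      have := sq_eq_zero_iff.1 h4
      exact this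
    simpa using h5
  -- invertibility
  have hdet : L.det ≠ 0 := by
    intro h0
    obtain ⟨u, hu0, hu⟩ := Matrix.exists_mulVec_eq_zero_iff.2 h0
    exact hu0 (hquad_zero u (by rw [hu]; simp))
  have hLunit : IsUnit L := (Matrix.isUnit_iff_isUnit_det L).2 (isUnit_iff_ne_zero.2 hdet)
  have hLv : L *ᵥ vstar = -l := by
    rw [hvstar, Matrix.mulVec_neg, Matrix.mulVec_mulVec,
      Matrix.mul_nonsing_inv _ ((Matrix.isUnit_iff_isUnit_det L).1 hLunit),
      Matrix.one_mulVec]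
  -- the objective in quadratic form
  have hgobj2 : ∀ v : Fin dv → ℝ,
      gobj v = (∫ x, A x * A x ∂μ) + 2 * (v ⬝ᵥ l) + v ⬝ᵥ (L *ᵥ v) := by
    intro v
    rw [hgobj v, hBintegral v, hquadform v]
    have e1 : (∑ i, (2 * v i) * ∫ x, A x * Bb i x ∂μ) = 2 * (v ⬝ᵥ l) := by
      simp only [dotProduct, Finset.mul_sum]
      exact Finset.sum_congr rfl fun i _ => by rw [hlv i]; ring
    rw [e1]
    ring
  -- symmetry
  have hLsym : ∀ i j, L i j = L j i := by
    intro i j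
    rw [hL i j, hL j i]
    have e : (fun x => Bb i x * Bb j x) = fun x => Bb j x * Bb i x :=
      funext fun x => mul_comm _ _
    rw [e]
    by_cases hij : i = j
    · simp [hij]
    · simp [hij, Ne.symm hij]
  have hsymm : ∀ a b : Fin dv → ℝ, a ⬝ᵥ (L *ᵥ b) = b ⬝ᵥ (L *ᵥ a) := by
    intro a b
    simp only [dotProduct, Matrix.mulVec, Finset.mul_sum]
    rw [Finset.sum_comm]
    exact Finset.sum_congr rfl fun j _ => Finset.sum_congr rfl fun i _ => by
      rw [hLsym i j]; ring
  refine ⟨hBint, hLunit, ?_⟩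
  intro v
  have key : gobj v = gobj vstar + (v - vstar) ⬝ᵥ (L *ᵥ (v - vstar)) := by
    rw [hgobj2 v, hgobj2 vstar]
    have e1 : v ⬝ᵥ (L *ᵥ vstar) = -(v ⬝ᵥ l) := by rw [hLv, dotProduct_neg]
    have e2 : vstar ⬝ᵥ (L *ᵥ v) = -(v ⬝ᵥ l) := by rw [hsymm vstar v, e1]
    have e3 : vstar ⬝ᵥ (L *ᵥ vstar) = -(vstar ⬝ᵥ l) := by rw [hLv, dotProduct_neg]
    have e4 : (v - vstar) ⬝ᵥ (L *ᵥ (v - vstar))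
        = v ⬝ᵥ (L *ᵥ v) - v ⬝ᵥ (L *ᵥ vstar)
          - (vstar ⬝ᵥ (L *ᵥ v) - vstar ⬝ᵥ (L *ᵥ vstar)) := by
      rw [Matrix.mulVec_sub, sub_dotProduct, dotProduct_sub,
        dotProduct_sub]
    rw [e4, e1, e2, e3]
    ring
  constructor
  · rw [key]
    exact le_add_of_nonneg_right (hquad_nonneg _)
  · intro heq
    have h0 : (v - vstar) ⬝ᵥ (L *ᵥ (v - vstar)) = 0 := by
      rw [key] at heq; linarith
    have := hquad_zero _ h0
    exact sub_eq_zero.1 this
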